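/- arXiv:2204.11438 — 2 statements merged into one kernel-verified Lean document; each statement's English description precedes it below -/
import Mathlib

section
/- Let n ≥ 3, k ∈ [n] ∖ {1, n−1, n}, and let F be n-completely mixable with mean 0 and finite positive variance. A random vector with all marginals F minimizes max_{K⊆[n], |K|=k} E[(∑_{i∈K} X_i)²] if and only if it is an NCD joint mix with correlation matrix P_n*. -/
set_option linter.unusedSectionVars false
set_option linter.unusedVariables false
set_option maxHeartbeats 1000000

open MeasureTheory ProbabilityTheory
open scoped ENNReal

noncomputable def cov {Ω : Type*} [MeasurableSpace Ω] (P : Measure Ω) (X Y : Ω → ℝ) : ℝ :=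
  ∫ ω, (X ω - ∫ x, X x ∂P) * (Y ω - ∫ x, Y x ∂P) ∂P

section JMHelpers

open Finset

variable {n : ℕ}

private lemma jm_pair_perm {i j i' j' : Fin n} (hij : i ≠ j) (hij' : i' ≠ j') :
    ∃ τ : Equiv.Perm (Fin n), τ i' = i ∧ τ j' = j := by
  classical
  set τ1 := Equiv.swap i' i with hτ1def
  have h1 : τ1 i' = i := Equiv.swap_apply_left _ _
  have hj'' : τ1 j' ≠ i := by
    rw [← h1]
    exact fun h => hij' (τ1.injective h).symm
  refine ⟨τ1.trans (Equiv.swap (τ1 j') j), ?_, ?_⟩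
  · simp only [Equiv.trans_apply, h1]
    exact Equiv.swap_apply_of_ne_of_ne (Ne.symm hj'') hij
  · simp only [Equiv.trans_apply]
    exact Equiv.swap_apply_left _ _

private lemma jm_set_perm {K J : Finset (Fin n)} (h : K.card = J.card) :
    ∃ π : Equiv.Perm (Fin n), K.image (⇑π) = J := by
  classical
  have h1 : Fintype.card {x // x ∈ K} = Fintype.card {x // x ∈ J} := by
    simpa [Fintype.card_coe] using h
  have h2 : Fintype.card {x // ¬ x ∈ K} = Fintype.card {x // ¬ x ∈ J} := by
    have hK := Fintype.card_subtype_compl (p := fun x : Fin n => x ∈ K)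
    have hJ := Fintype.card_subtype_compl (p := fun x : Fin n => x ∈ J)
    have hKle := Fintype.card_subtype_le (p := fun x : Fin n => x ∈ K)
    have hJle := Fintype.card_subtype_le (p := fun x : Fin n => x ∈ J)
    omega
  let e := Fintype.equivOfCardEq h1
  let e' := Fintype.equivOfCardEq h2
  refine ⟨Equiv.subtypeCongr e e', ?_⟩
  have hsub : K.image (⇑(Equiv.subtypeCongr e e')) ⊆ J := by
    intro b hb
    simp only [Finset.mem_image] at hb
    obtain ⟨a, ha, rfl⟩ := hb
    have hpos := Equiv.sumCompl_symm_apply_of_pos (p := fun x : Fin n => x ∈ K) ha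
    have : Equiv.subtypeCongr e e' a = (e ⟨a, ha⟩ : Fin n) := by
      simp [Equiv.subtypeCongr, hpos]
    rw [this]
    exact (e ⟨a, ha⟩).2
  refine (Finset.eq_of_subset_of_card_le hsub ?_)
  rw [Finset.card_image_of_injective _ (Equiv.injective _), h]

private lemma jm_S_perm (m : Fin n → Fin n → ℝ) (π : Equiv.Perm (Fin n)) :
    (∑ i, ∑ j ∈ univ.erase i, m (π i) (π j)) = ∑ i, ∑ j ∈ univ.erase i, m i j := by
  classical
  have h1 : ∀ i : Fin n, ∑ j ∈ univ.erase i, m (π i) (π j)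
      = ∑ j ∈ univ.erase (π i), m (π i) j := by
    intro i
    calc ∑ j ∈ univ.erase i, m (π i) (π j)
        = ∑ j ∈ (univ.erase i).image (⇑π), m (π i) j :=
          (Finset.sum_image (fun a _ b _ hab => π.injective hab)).symm
      _ = ∑ j ∈ univ.erase (π i), m (π i) j := by
          rw [Finset.image_erase π.injective, Finset.image_univ_of_surjective π.surjective]
  simp_rw [h1]
  exact Fintype.sum_equiv π _ _ (fun i => rfl)

private lemma jm_Tpair_eq (m : Fin n → Fin n → ℝ) {i j i' j' : Fin n} (hij : i ≠ j)
    (hij' : i' ≠ j') :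
    ∑ π : Equiv.Perm (Fin n), m (π i) (π j) = ∑ π : Equiv.Perm (Fin n), m (π i') (π j') := by
  obtain ⟨τ, hi, hj⟩ := jm_pair_perm hij hij'
  refine Fintype.sum_equiv (Equiv.mulRight τ) _ _ (fun π => ?_)
  show m (π i) (π j) = m ((π * τ) i') ((π * τ) j')
  simp [Equiv.Perm.mul_apply, hi, hj]

private lemma jm_Tpair_total (hn : 1 ≤ n) (m : Fin n → Fin n → ℝ) {i j : Fin n} (hij : i ≠ j) :
    ((n : ℝ) * ((n : ℝ) - 1)) * ∑ π : Equiv.Perm (Fin n), m (π i) (π j)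
      = (Fintype.card (Equiv.Perm (Fin n)) : ℝ) * ∑ a, ∑ b ∈ univ.erase a, m a b := by
  classical
  have h1 : ∀ a : Fin n, ∑ b ∈ univ.erase a, ∑ π : Equiv.Perm (Fin n), m (π a) (π b)
      = ∑ π : Equiv.Perm (Fin n), ∑ b ∈ univ.erase a, m (π a) (π b) := fun a => Finset.sum_comm
  have key : ∑ a : Fin n, ∑ b ∈ univ.erase a, (∑ π : Equiv.Perm (Fin n), m (π a) (π b))
      = ∑ π : Equiv.Perm (Fin n), ∑ a : Fin n, ∑ b ∈ univ.erase a, m (π a) (π b) := by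
    simp_rw [h1]
    exact Finset.sum_comm
  have h2 : ∑ a : Fin n, ∑ b ∈ univ.erase a, (∑ π : Equiv.Perm (Fin n), m (π a) (π b))
      = ∑ a : Fin n, ∑ b ∈ univ.erase a, (∑ π : Equiv.Perm (Fin n), m (π i) (π j)) :=
    Finset.sum_congr rfl fun a _ => Finset.sum_congr rfl fun b hb =>
      jm_Tpair_eq m (Finset.ne_of_mem_erase hb).symm hij
  have h3 : ∑ π : Equiv.Perm (Fin n), ∑ a : Fin n, ∑ b ∈ univ.erase a, m (π a) (π b)
      = (Fintype.card (Equiv.Perm (Fin n)) : ℝ) * ∑ a, ∑ b ∈ univ.erase a, m a b := by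
    rw [Finset.sum_congr rfl (fun π _ => jm_S_perm m π), Finset.sum_const, Finset.card_univ,
      nsmul_eq_mul]
  have hcard : ∀ a : Fin n, (univ.erase a).card = n - 1 := fun a => by
    rw [Finset.card_erase_of_mem (Finset.mem_univ a), Finset.card_univ, Fintype.card_fin]
  have h4 : ∀ a : Fin n, (∑ _b ∈ univ.erase a, (∑ π : Equiv.Perm (Fin n), m (π i) (π j)))
      = ((n - 1 : ℕ) : ℝ) * ∑ π : Equiv.Perm (Fin n), m (π i) (π j) := fun a => by
    rw [Finset.sum_const, hcard a, nsmul_eq_mul]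
  rw [← h3, ← key, h2]
  simp_rw [h4]
  rw [Finset.sum_const, Finset.card_univ, Fintype.card_fin, nsmul_eq_mul]
  push_cast [Nat.cast_sub hn]
  ring

/-- Sum over ordered distinct pairs inside a finset. -/
private def jmH (m : Fin n → Fin n → ℝ) (s : Finset (Fin n)) : ℝ :=
  ∑ i ∈ s, ∑ j ∈ s.erase i, m i j

private lemma jmH_insert (m : Fin n → Fin n → ℝ) (hsym : ∀ a b, m a b = m b a)
    {M : Finset (Fin n)} {a : Fin n} (ha : a ∉ M) :
    jmH m (insert a M) = jmH m M + 2 * ∑ j ∈ M, m a j := by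
  classical
  rw [jmH, Finset.sum_insert ha, Finset.erase_insert ha]
  have h2 : ∀ i ∈ M, ∑ j ∈ (insert a M).erase i, m i j = m i a + ∑ j ∈ M.erase i, m i j := by
    intro i hi
    have hia : a ≠ i := fun h => ha (h ▸ hi)
    rw [Finset.erase_insert_of_ne hia, Finset.sum_insert
      (fun h => ha (Finset.mem_of_mem_erase h))]
  rw [Finset.sum_congr rfl h2, Finset.sum_add_distrib]
  have h3 : ∑ i ∈ M, m i a = ∑ j ∈ M, m a j := Finset.sum_congr rfl fun i _ => hsym i a
  rw [h3, jmH]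
  ring

private lemma jm_matrix {k : ℕ} (hk2 : 2 ≤ k) (hkn : k + 2 ≤ n)
    (m : Fin n → Fin n → ℝ) (hsym : ∀ a b, m a b = m b a) {r C : ℝ}
    (hrow : ∀ i, ∑ j ∈ univ.erase i, m i j = r)
    (hH : ∀ J : Finset (Fin n), J.card = k → jmH m J = C) :
    ∀ i j, i ≠ j → m i j = r / ((n : ℝ) - 1) := by
  classical
  have hcol : ∀ (M : Finset (Fin n)), ∀ j ∈ M,
      ∑ a ∈ univ \ M, m a j = r - ∑ a ∈ M.erase j, m a j := by
    intro M j hj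
    have hsubJ : M.erase j ⊆ univ.erase j := fun x hx =>
      Finset.mem_erase.mpr ⟨(Finset.mem_erase.mp hx).1, Finset.mem_univ x⟩
    have hsd : (univ.erase j) \ (M.erase j) = univ \ M := by
      ext x
      simp only [Finset.mem_sdiff, Finset.mem_erase, Finset.mem_univ, true_and, and_true,
        not_and]
      constructor
      · rintro ⟨hxj, hx⟩ hxM; exact (hx (fun h => (hxj h).elim) hxM : False)
      · intro hxM
        exact ⟨fun h => hxM (h ▸ hj), fun _ h => hxM h⟩
    have hsplit := Finset.sum_sdiff (f := fun a => m a j) hsubJ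
    rw [hsd] at hsplit
    have hrowj : ∑ a ∈ univ.erase j, m a j = r := by
      rw [Finset.sum_congr rfl (fun a _ => hsym a j)]
      exact hrow j
    linarith
  have step : ∀ q : ℕ, 2 ≤ q → q + 3 ≤ n →
      (∃ C', ∀ J : Finset (Fin n), J.card = q + 1 → jmH m J = C') →
      (∃ C'', ∀ J : Finset (Fin n), J.card = q → jmH m J = C'') := by
    rintro q hq2 hqn ⟨C', hC'⟩
    refine ⟨(((n : ℝ) - q) * C' - 2 * q * r) / (((n : ℝ) - q) - 2), ?_⟩
    intro M hM
    have hf : ∀ a ∉ M, ∑ j ∈ M, m a j = (C' - jmH m M) / 2 := by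
      intro a ha
      have hcard : (insert a M).card = q + 1 := by
        rw [Finset.card_insert_of_notMem ha, hM]
      have := hC' _ hcard
      rw [jmH_insert m hsym ha] at this
      linarith
    have hsum1 : ∑ a ∈ univ \ M, (∑ j ∈ M, m a j) = ((n - q : ℕ) : ℝ) * ((C' - jmH m M) / 2) := by
      rw [Finset.sum_congr rfl (fun a ha => hf a (Finset.mem_sdiff.mp ha).2),
        Finset.sum_const, nsmul_eq_mul, Finset.card_sdiff_of_subset (Finset.subset_univ M),
        Finset.card_univ, Fintype.card_fin, hM]
    have hsum2 : ∑ a ∈ univ \ M, (∑ j ∈ M, m a j) = (q : ℝ) * r - jmH m M := by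
      rw [Finset.sum_comm]
      rw [Finset.sum_congr rfl (fun j hj => hcol M j hj), Finset.sum_sub_distrib,
        Finset.sum_const, hM, nsmul_eq_mul]
      have : ∑ j ∈ M, ∑ a ∈ M.erase j, m a j = jmH m M := by
        rw [jmH]
        exact Finset.sum_congr rfl fun j _ => Finset.sum_congr rfl fun a _ => hsym a j
      rw [this]
    have hnq : ((n - q : ℕ) : ℝ) = (n : ℝ) - q := by
      push_cast [Nat.cast_sub (by omega : q ≤ n)]; ring
    rw [hnq] at hsum1
    have hden : ((n : ℝ) - q) - 2 ≠ 0 := by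
      have : (q : ℝ) + 3 ≤ (n : ℝ) := by exact_mod_cast hqn
      intro h; nlinarith
    field_simp
    have := hsum1.symm.trans hsum2
    nlinarith [this]
  have main : ∀ d : ℕ, ∀ q : ℕ, q + d = k → 2 ≤ q →
      ∃ C', ∀ J : Finset (Fin n), J.card = q → jmH m J = C' := by
    intro d
    induction d with
    | zero =>
      intro q hq h2
      have hqk : q = k := by omega
      subst hqk
      exact ⟨C, hH⟩
    | succ d ih =>
      intro q hq h2
      have prev := ih (q + 1) (by omega) (by omega)
      exact step q h2 (by omega) prev
  obtain ⟨C2, hC2⟩ := main (k - 2) 2 (by omega) le_rfl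
  have hpairval : ∀ a b : Fin n, a ≠ b → m a b = C2 / 2 := by
    intro a b hab
    have hcard : ({a, b} : Finset (Fin n)).card = 2 := by
      rw [Finset.card_insert_of_notMem (by simp [hab]), Finset.card_singleton]
    have hv := hC2 {a, b} hcard
    have e1 : ({a, b} : Finset (Fin n)).erase a = {b} := by
      ext x
      simp only [Finset.mem_erase, Finset.mem_insert, Finset.mem_singleton]
      constructor
      · rintro ⟨hxa, h | h⟩
        · exact absurd h hxa
        · exact h
      · rintro rfl
        exact ⟨Ne.symm hab, Or.inr rfl⟩
    have e2 : ({a, b} : Finset (Fin n)).erase b = {a} := by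
      ext x
      simp only [Finset.mem_erase, Finset.mem_insert, Finset.mem_singleton]
      constructor
      · rintro ⟨hxb, h | h⟩
        · exact h
        · exact absurd h hxb
      · rintro rfl
        exact ⟨hab, Or.inl rfl⟩
    have hHab : jmH m {a, b} = 2 * m a b := by
      rw [jmH, Finset.sum_pair hab, e1, e2, Finset.sum_singleton, Finset.sum_singleton,
        hsym b a]
      ring
    rw [hHab] at hv
    linarith
  intro i j hij
  have hr : r = ((n : ℝ) - 1) * (C2 / 2) := by
    rw [← hrow i, Finset.sum_congr rfl (fun x hx => hpairval i x (Finset.ne_of_mem_erase hx).symm),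
      Finset.sum_const, Finset.card_erase_of_mem (Finset.mem_univ i), Finset.card_univ,
      Fintype.card_fin, nsmul_eq_mul]
    push_cast [Nat.cast_sub (by omega : 1 ≤ n)]
    ring
  have hn1 : ((n : ℝ) - 1) ≠ 0 := by
    have : (4 : ℝ) ≤ (n : ℝ) := by exact_mod_cast (by omega : 4 ≤ n)
    intro h; nlinarith
  rw [hpairval i j hij, hr]
  field_simp

end JMHelpers

section JMAnalytic

open Finset

variable {Ω' : Type*} [MeasurableSpace Ω'] {Q : Measure Ω'} [IsProbabilityMeasure Q]
  {F : Measure ℝ} [IsProbabilityMeasure F] {n : ℕ}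

private lemma jm_memL2 (hF2 : MemLp id 2 F) {W : Ω' → ℝ} (hW : Measurable W)
    (hmap : Measure.map W Q = F) : MemLp W 2 Q := by
  have h1 : MemLp id 2 (Measure.map W Q) := by rwa [hmap]
  simpa [Function.id_comp] using (memLp_map_measure_iff h1.1 hW.aemeasurable).1 h1

private lemma jm_int0 (hmean : ∫ x, x ∂F = 0) {W : Ω' → ℝ} (hW : Measurable W)
    (hmap : Measure.map W Q = F) : ∫ ω, W ω ∂Q = 0 := by
  have h : ∫ x, (fun y => y) x ∂(Measure.map W Q) = ∫ ω, W ω ∂Q :=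
    integral_map hW.aemeasurable aestronglyMeasurable_id
  rw [hmap] at h
  rw [← h]
  exact hmean

private lemma jm_int_sq (hF2 : MemLp id 2 F) (hmean : ∫ x, x ∂F = 0) {W : Ω' → ℝ}
    (hW : Measurable W) (hmap : Measure.map W Q = F) :
    ∫ ω, (W ω) ^ 2 ∂Q = variance id F := by
  have hvar : variance id F = ∫ x, x ^ 2 ∂F := by
    rw [variance_eq_sub hF2]
    simp [hmean]
  have h : ∫ x, (fun y => y ^ 2) x ∂(Measure.map W Q) = ∫ ω, (W ω) ^ 2 ∂Q :=
    integral_map hW.aemeasurable ((measurable_id.pow_const 2).aestronglyMeasurable)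
  rw [hmap] at h
  rw [hvar, ← h]

private lemma jm_int_mul {f g : Ω' → ℝ} (hf : MemLp f 2 Q) (hg : MemLp g 2 Q) :
    Integrable (fun ω => f ω * g ω) Q := by
  have h := (((hf.add hg).integrable_sq.sub hf.integrable_sq).sub hg.integrable_sq).div_const 2
  refine h.congr (Filter.Eventually.of_forall fun ω => ?_)
  simp only [Pi.add_apply, Pi.pow_apply, Pi.sub_apply]
  ring

private lemma jm_expand {X : Fin n → Ω' → ℝ} (hL2 : ∀ i, MemLp (X i) 2 Q) (K : Finset (Fin n)) :
    ∫ ω, (∑ i ∈ K, X i ω) ^ 2 ∂Q = ∑ i ∈ K, ∑ j ∈ K, ∫ ω, X i ω * X j ω ∂Q := by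
  have h1 : ∀ ω : Ω', (∑ i ∈ K, X i ω) ^ 2 = ∑ i ∈ K, ∑ j ∈ K, X i ω * X j ω := by
    intro ω; rw [sq, Finset.sum_mul_sum]
  simp_rw [h1]
  rw [integral_finset_sum K (fun i _ => integrable_finset_sum K
    (fun j _ => jm_int_mul (hL2 i) (hL2 j)))]
  exact Finset.sum_congr rfl fun i _ =>
    integral_finset_sum K (fun j _ => jm_int_mul (hL2 i) (hL2 j))

private lemma jm_expand_split (hF2 : MemLp id 2 F) (hmean : ∫ x, x ∂F = 0)
    {X : Fin n → Ω' → ℝ} (hmX : ∀ i, Measurable (X i))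
    (hmarg : ∀ i, Measure.map (X i) Q = F) (K : Finset (Fin n)) :
    ∫ ω, (∑ i ∈ K, X i ω) ^ 2 ∂Q
      = (K.card : ℝ) * variance id F + ∑ i ∈ K, ∑ j ∈ K.erase i, ∫ ω, X i ω * X j ω ∂Q := by
  have hL2 : ∀ i, MemLp (X i) 2 Q := fun i => jm_memL2 hF2 (hmX i) (hmarg i)
  rw [jm_expand hL2 K]
  have h2 : ∀ i ∈ K, ∑ j ∈ K, ∫ ω, X i ω * X j ω ∂Q
      = variance id F + ∑ j ∈ K.erase i, ∫ ω, X i ω * X j ω ∂Q := by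
    intro i hi
    rw [← Finset.add_sum_erase K _ hi]
    congr 1
    rw [← jm_int_sq hF2 hmean (hmX i) (hmarg i)]
    exact integral_congr_ae (Filter.Eventually.of_forall fun ω => (sq (X i ω)).symm)
  rw [Finset.sum_congr rfl h2, Finset.sum_add_distrib, Finset.sum_const, nsmul_eq_mul]

/-- The averaged-over-permutations identity. -/
private lemma jm_avg (hF2 : MemLp id 2 F) (hmean : ∫ x, x ∂F = 0)
    {Y : Fin n → Ω' → ℝ} (hmY : ∀ i, Measurable (Y i))
    (hmarg : ∀ i, Measure.map (Y i) Q = F)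
    {k : ℕ} {K0 : Finset (Fin n)} (hK0 : K0.card = k) (hk1 : 1 ≤ k)
    {i0 j0 : Fin n} (h00 : i0 ≠ j0) :
    ∑ π : Equiv.Perm (Fin n), ∫ ω, (∑ i ∈ K0, Y (π i) ω) ^ 2 ∂Q
      = (Fintype.card (Equiv.Perm (Fin n)) : ℝ) * ((k : ℝ) * variance id F)
        + ((k : ℝ) * ((k : ℝ) - 1))
          * ∑ π : Equiv.Perm (Fin n), ∫ ω, Y (π i0) ω * Y (π j0) ω ∂Q := by
  classical
  have hterm : ∀ π : Equiv.Perm (Fin n),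
      ∫ ω, (∑ i ∈ K0, Y (π i) ω) ^ 2 ∂Q
        = (k : ℝ) * variance id F
          + ∑ i ∈ K0, ∑ j ∈ K0.erase i, ∫ ω, Y (π i) ω * Y (π j) ω ∂Q := by
    intro π
    have := jm_expand_split hF2 hmean (X := fun i => Y (π i)) (fun i => hmY (π i))
      (fun i => hmarg (π i)) K0
    rwa [hK0] at this
  simp_rw [hterm]
  rw [Finset.sum_add_distrib, Finset.sum_const, Finset.card_univ, nsmul_eq_mul]
  congr 1
  have hswap : ∑ π : Equiv.Perm (Fin n), ∑ i ∈ K0, ∑ j ∈ K0.erase i,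
      ∫ ω, Y (π i) ω * Y (π j) ω ∂Q
      = ∑ i ∈ K0, ∑ j ∈ K0.erase i, ∑ π : Equiv.Perm (Fin n),
          ∫ ω, Y (π i) ω * Y (π j) ω ∂Q := by
    rw [Finset.sum_comm]
    exact Finset.sum_congr rfl fun i _ => Finset.sum_comm
  rw [hswap]
  have hconst : ∀ i ∈ K0, ∀ j ∈ K0.erase i,
      (∑ π : Equiv.Perm (Fin n), ∫ ω, Y (π i) ω * Y (π j) ω ∂Q)
        = ∑ π : Equiv.Perm (Fin n), ∫ ω, Y (π i0) ω * Y (π j0) ω ∂Q := by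
    intro i _ j hj
    exact jm_Tpair_eq (fun a b => ∫ ω, Y a ω * Y b ω ∂Q)
      (Finset.ne_of_mem_erase hj).symm h00
  rw [Finset.sum_congr rfl (fun i hi => Finset.sum_congr rfl (hconst i hi))]
  have hcount : ∀ i ∈ K0, ∑ _j ∈ K0.erase i,
      (∑ π : Equiv.Perm (Fin n), ∫ ω, Y (π i0) ω * Y (π j0) ω ∂Q)
      = ((k - 1 : ℕ) : ℝ) * ∑ π : Equiv.Perm (Fin n), ∫ ω, Y (π i0) ω * Y (π j0) ω ∂Q := by
    intro i hi
    rw [Finset.sum_const, Finset.card_erase_of_mem hi, hK0, nsmul_eq_mul]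
  rw [Finset.sum_congr rfl hcount, Finset.sum_const, hK0, nsmul_eq_mul]
  push_cast [Nat.cast_sub hk1]
  ring

private lemma jm_sSup_const {k : ℕ} (hkn : k ≤ n) {v : Finset (Fin n) → ℝ} {b : ℝ}
    (hv : ∀ K : Finset (Fin n), K.card = k → v K = b) :
    sSup (v '' {K : Finset (Fin n) | K.card = k}) = b := by
  obtain ⟨K0, -, hK0⟩ := Finset.exists_subset_card_eq
    (s := (univ : Finset (Fin n))) (n := k) (by simpa using hkn)
  have himg : v '' {K : Finset (Fin n) | K.card = k} = {b} := by
    ext x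
    constructor
    · rintro ⟨K, hK, rfl⟩
      exact hv K hK
    · rintro rfl
      exact ⟨K0, hK0, hv K0 hK0⟩
  rw [himg, csSup_singleton]

private lemma jm_mem_img {k : ℕ} {v : Finset (Fin n) → ℝ} {K : Finset (Fin n)} (hK : K.card = k) :
    v K ∈ v '' {K : Finset (Fin n) | K.card = k} := ⟨K, hK, rfl⟩

private lemma jm_bdd {k : ℕ} (v : Finset (Fin n) → ℝ) :
    BddAbove (v '' {K : Finset (Fin n) | K.card = k}) :=
  ((Set.toFinite _).image v).bddAbove

/-- row sums under the joint mix property -/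
private lemma jm_row (hF2 : MemLp id 2 F) (hmean : ∫ x, x ∂F = 0)
    {X : Fin n → Ω' → ℝ} (hmX : ∀ i, Measurable (X i))
    (hmarg : ∀ i, Measure.map (X i) Q = F)
    (hsum : ∀ᵐ ω ∂Q, ∑ i, X i ω = 0) (i : Fin n) :
    ∑ j ∈ univ.erase i, ∫ ω, X i ω * X j ω ∂Q = -(variance id F) := by
  have hXL2 : ∀ i, MemLp (X i) 2 Q := fun i => jm_memL2 hF2 (hmX i) (hmarg i)
  have h0 : ∫ ω, X i ω * (∑ j, X j ω) ∂Q = 0 := by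
    have hae : (fun ω => X i ω * ∑ j, X j ω) =ᵐ[Q] fun _ => (0 : ℝ) :=
      hsum.mono fun ω hω => by dsimp only; rw [hω, mul_zero]
    rw [integral_congr_ae hae]
    simp
  have h1 : ∫ ω, X i ω * (∑ j, X j ω) ∂Q = ∑ j, ∫ ω, X i ω * X j ω ∂Q := by
    have hdist : ∀ ω : Ω', X i ω * (∑ j, X j ω) = ∑ j, X i ω * X j ω := fun ω =>
      Finset.mul_sum _ _ _
    simp_rw [hdist]
    exact integral_finset_sum _ (fun j _ => jm_int_mul (hXL2 i) (hXL2 j))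
  have h2 : ∑ j, ∫ ω, X i ω * X j ω ∂Q
      = (∫ ω, X i ω * X i ω ∂Q) + ∑ j ∈ univ.erase i, ∫ ω, X i ω * X j ω ∂Q :=
    (Finset.add_sum_erase _ _ (Finset.mem_univ i)).symm
  have h3 : ∫ ω, X i ω * X i ω ∂Q = variance id F := by
    rw [← jm_int_sq hF2 hmean (hmX i) (hmarg i)]
    exact integral_congr_ae (Filter.Eventually.of_forall fun ω => (sq (X i ω)).symm)
  rw [h1, h2, h3] at h0
  linarith

/-- value of each k-subset under the optimal covariances -/
private lemma jm_value {k : ℕ} (hk1 : 1 ≤ k) (hF2 : MemLp id 2 F) (hmean : ∫ x, x ∂F = 0)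
    {Y : Fin n → Ω' → ℝ} (hmY : ∀ i, Measurable (Y i))
    (hmarg : ∀ i, Measure.map (Y i) Q = F)
    (hpair : ∀ i j, i ≠ j → ∫ ω, Y i ω * Y j ω ∂Q = -(variance id F) / ((n : ℝ) - 1))
    {K : Finset (Fin n)} (hK : K.card = k) :
    ∫ ω, (∑ i ∈ K, Y i ω) ^ 2 ∂Q
      = (k : ℝ) * variance id F
        + (k : ℝ) * ((k : ℝ) - 1) * (-(variance id F) / ((n : ℝ) - 1)) := by
  rw [jm_expand_split hF2 hmean hmY hmarg K, hK]
  congr 1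
  have h1 : ∀ i ∈ K, ∑ j ∈ K.erase i, ∫ ω, Y i ω * Y j ω ∂Q
      = ((k - 1 : ℕ) : ℝ) * (-(variance id F) / ((n : ℝ) - 1)) := by
    intro i hi
    rw [Finset.sum_congr rfl (fun j hj => hpair i j (Finset.ne_of_mem_erase hj).symm),
      Finset.sum_const, Finset.card_erase_of_mem hi, hK, nsmul_eq_mul]
  rw [Finset.sum_congr rfl h1, Finset.sum_const, hK, nsmul_eq_mul]
  push_cast [Nat.cast_sub hk1]
  ring

/-- the universal lower bound for the max over k-subsets -/
private lemma jm_lower_bound {k : ℕ} (hn : 3 ≤ n) (hk2 : 2 ≤ k) (hkn : k ≤ n)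
    (hF2 : MemLp id 2 F) (hmean : ∫ x, x ∂F = 0)
    {Y : Fin n → Ω' → ℝ} (hmY : ∀ i, Measurable (Y i))
    (hmarg : ∀ i, Measure.map (Y i) Q = F) :
    (k : ℝ) * variance id F
        + (k : ℝ) * ((k : ℝ) - 1) * (-(variance id F) / ((n : ℝ) - 1))
      ≤ sSup ((fun K : Finset (Fin n) => ∫ ω, (∑ i ∈ K, Y i ω) ^ 2 ∂Q) ''
          {K : Finset (Fin n) | K.card = k}) := by
  classical
  set V := variance id F with hV
  set v : Finset (Fin n) → ℝ := fun K => ∫ ω, (∑ i ∈ K, Y i ω) ^ 2 ∂Q with hv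
  set s := sSup (v '' {K : Finset (Fin n) | K.card = k}) with hs
  obtain ⟨K0, -, hK0⟩ := Finset.exists_subset_card_eq
    (s := (univ : Finset (Fin n))) (n := k) (by simpa using hkn)
  have hi0j0 : (⟨0, by omega⟩ : Fin n) ≠ (⟨1, by omega⟩ : Fin n) := by
    intro h
    have := congrArg Fin.val h
    simp at this
  set i0 : Fin n := ⟨0, by omega⟩
  set j0 : Fin n := ⟨1, by omega⟩
  set g := (Fintype.card (Equiv.Perm (Fin n)) : ℝ) with hg
  have hgpos : (0 : ℝ) < g := by
    rw [hg]; exact_mod_cast Fintype.card_pos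
  have hNR : (3 : ℝ) ≤ (n : ℝ) := by exact_mod_cast hn
  have hkR : (2 : ℝ) ≤ (k : ℝ) := by exact_mod_cast hk2
  -- each permuted value is at most the sup
  have htermX : ∀ π : Equiv.Perm (Fin n),
      ∫ ω, (∑ i ∈ K0, Y (π i) ω) ^ 2 ∂Q = v (K0.image (⇑π)) := by
    intro π
    have hsum : ∀ ω : Ω', ∑ a ∈ K0.image (⇑π), Y a ω = ∑ i ∈ K0, Y (π i) ω := fun ω =>
      Finset.sum_image (fun a _ b _ hab => π.injective hab)
    rw [hv]
    simp only []
    simp_rw [hsum]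
  have hterm : ∀ π : Equiv.Perm (Fin n), ∫ ω, (∑ i ∈ K0, Y (π i) ω) ^ 2 ∂Q ≤ s := by
    intro π
    rw [htermX π]
    exact le_csSup (jm_bdd v)
      (jm_mem_img (by rw [Finset.card_image_of_injective _ π.injective, hK0]))
  set T := ∑ π : Equiv.Perm (Fin n), ∫ ω, (∑ i ∈ K0, Y (π i) ω) ^ 2 ∂Q with hT
  have hTle : T ≤ g * s := by
    calc T ≤ ∑ _π : Equiv.Perm (Fin n), s := Finset.sum_le_sum (fun π _ => hterm π)
      _ = g * s := by rw [Finset.sum_const, Finset.card_univ, nsmul_eq_mul]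
  set Tp := ∑ π : Equiv.Perm (Fin n), ∫ ω, Y (π i0) ω * Y (π j0) ω ∂Q with hTp
  set S := ∑ a, ∑ b ∈ univ.erase a, ∫ ω, Y a ω * Y b ω ∂Q with hS
  have hID : T = g * ((k : ℝ) * V) + ((k : ℝ) * ((k : ℝ) - 1)) * Tp :=
    jm_avg hF2 hmean hmY hmarg hK0 (by omega) hi0j0
  have hTptot : ((n : ℝ) * ((n : ℝ) - 1)) * Tp = g * S :=
    jm_Tpair_total (by omega) (fun a b => ∫ ω, Y a ω * Y b ω ∂Q) hi0j0
  have hSge : -((n : ℝ) * V) ≤ S := by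
    have h1 := jm_expand_split hF2 hmean hmY hmarg (univ : Finset (Fin n))
    rw [Finset.card_univ, Fintype.card_fin] at h1
    have h2 : (0 : ℝ) ≤ ∫ ω, (∑ i, Y i ω) ^ 2 ∂Q := integral_nonneg fun ω => sq_nonneg _
    rw [h1] at h2
    linarith
  -- arithmetic
  have hkk : (0 : ℝ) ≤ (k : ℝ) * ((k : ℝ) - 1) := by nlinarith
  have e1 : ((n : ℝ) * ((n : ℝ) - 1)) * T
      = ((n : ℝ) * ((n : ℝ) - 1)) * (g * ((k : ℝ) * V))
        + ((k : ℝ) * ((k : ℝ) - 1)) * (g * S) := by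
    linear_combination ((n : ℝ) * ((n : ℝ) - 1)) * hID + ((k : ℝ) * ((k : ℝ) - 1)) * hTptot
  have e2 : ((k : ℝ) * ((k : ℝ) - 1)) * (g * (-((n : ℝ) * V)))
      ≤ ((k : ℝ) * ((k : ℝ) - 1)) * (g * S) :=
    mul_le_mul_of_nonneg_left (mul_le_mul_of_nonneg_left hSge hgpos.le) hkk
  have e3 : ((n : ℝ) * ((n : ℝ) - 1)) * T ≤ ((n : ℝ) * ((n : ℝ) - 1)) * (g * s) :=
    mul_le_mul_of_nonneg_left hTle (by nlinarith)
  have hposc : (0 : ℝ) < (n : ℝ) * ((n : ℝ) - 1) * g :=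
    mul_pos (by nlinarith) hgpos
  refine le_of_mul_le_mul_left ?_ hposc
  have hbid : ((n : ℝ) * ((n : ℝ) - 1) * g)
      * ((k : ℝ) * V + (k : ℝ) * ((k : ℝ) - 1) * (-V / ((n : ℝ) - 1)))
      = ((n : ℝ) * ((n : ℝ) - 1)) * (g * ((k : ℝ) * V))
        + ((k : ℝ) * ((k : ℝ) - 1)) * (g * (-((n : ℝ) * V))) := by
    have hne : ((n : ℝ) - 1) ≠ 0 := by nlinarith
    field_simp
  rw [hbid]
  calc ((n : ℝ) * ((n : ℝ) - 1)) * (g * ((k : ℝ) * V))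
        + ((k : ℝ) * ((k : ℝ) - 1)) * (g * (-((n : ℝ) * V)))
      ≤ ((n : ℝ) * ((n : ℝ) - 1)) * (g * ((k : ℝ) * V))
        + ((k : ℝ) * ((k : ℝ) - 1)) * (g * S) := by linarith
    _ = ((n : ℝ) * ((n : ℝ) - 1)) * T := e1.symm
    _ ≤ ((n : ℝ) * ((n : ℝ) - 1)) * (g * s) := e3
    _ = ((n : ℝ) * ((n : ℝ) - 1) * g) * s := by ring

end JMAnalytic

section JMConstruct
open Finset
variable {F : Measure ℝ} [IsProbabilityMeasure F] {n : ℕ}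

private lemma jm_map_sum {α β ι : Type*} [MeasurableSpace α] [MeasurableSpace β] {f : α → β}
    (hf : Measurable f) (s : Finset ι) (μ : ι → Measure α) :
    Measure.map f (∑ i ∈ s, μ i) = ∑ i ∈ s, Measure.map f (μ i) := by
  ext t ht
  rw [Measure.map_apply hf ht, Measure.finset_sum_apply, Measure.finset_sum_apply]
  exact Finset.sum_congr rfl fun i _ => (Measure.map_apply hf ht).symm

lemma jm_construct (hn : 3 ≤ n) (hF2 : MemLp id 2 F) (hmean : ∫ x, x ∂F = 0)
    (hCM : ∃ (Ω0 : Type) (_ : MeasurableSpace Ω0) (P0 : Measure Ω0)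
        (_ : IsProbabilityMeasure P0) (Z : Fin n → Ω0 → ℝ),
      (∀ i, Measurable (Z i)) ∧ (∀ i, Measure.map (Z i) P0 = F) ∧
      ∃ c : ℝ, ∀ᵐ ω ∂P0, ∑ i, Z i ω = c) :
    ∃ (Ω' : Type) (m' : MeasurableSpace Ω') (Q : Measure Ω')
      (_ : IsProbabilityMeasure Q) (Y : Fin n → Ω' → ℝ),
      (∀ i, Measurable (Y i)) ∧ (∀ i, Measure.map (Y i) Q = F) ∧
      (∀ i j, i ≠ j →
        ∫ p, Y i p * Y j p ∂Q = -(variance id F) / ((n : ℝ) - 1)) := by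
  classical
  obtain ⟨Ω0, m0, P0, hP0, Z, hZm, hZmarg, c, hc⟩ := hCM
  set V := variance id F with hV
  have hZL2 : ∀ i, MemLp (Z i) 2 P0 := fun i => jm_memL2 hF2 (hZm i) (hZmarg i)
  -- the constant is zero
  have hint : Integrable (fun ω => ∑ i, Z i ω) P0 :=
    integrable_finset_sum _ (fun i _ => ((hZL2 i).integrable one_le_two))
  have hc0 : c = 0 := by
    have h1 : ∫ ω, (∑ i, Z i ω) ∂P0 = 0 := by
      rw [integral_finset_sum _ (fun i _ => (hZL2 i).integrable one_le_two)]
      exact Finset.sum_eq_zero fun i _ => jm_int0 hmean (hZm i) (hZmarg i)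
    have h2 : ∫ ω, (∑ i, Z i ω) ∂P0 = c := by
      rw [integral_congr_ae (hc.mono fun ω hω => hω)]
      simp
    rw [h2] at h1; exact h1
  rw [hc0] at hc
  -- sum of squares of the joint mix vanishes
  have hZsq : ∫ ω, (∑ i, Z i ω) ^ 2 ∂P0 = 0 := by
    have hae : (fun ω => (∑ i, Z i ω) ^ 2) =ᵐ[P0] fun _ => (0 : ℝ) :=
      hc.mono fun ω hω => by dsimp only; rw [hω]; norm_num
    rw [integral_congr_ae hae]
    simp
  -- hence the total off-diagonal sum is -n V
  have hSZ : ∑ a, ∑ b ∈ univ.erase a, (∫ ω, Z a ω * Z b ω ∂P0) = -((n : ℝ) * V) := by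
    have := jm_expand_split hF2 hmean hZm hZmarg (univ : Finset (Fin n))
    rw [hZsq, Finset.card_univ, Fintype.card_fin] at this
    linarith
  -- build the permutation-symmetrized coupling
  set G := Equiv.Perm (Fin n) with hG
  letI : MeasurableSpace G := ⊤
  haveI : MeasurableSingletonClass G := ⟨fun _ => trivial⟩
  have hpairm : ∀ π : G, Measurable (fun ω : Ω0 => (ω, π)) := fun π =>
    measurable_id.prodMk measurable_const
  set μ : Measure (Ω0 × G) :=
    ((Fintype.card G : ℝ≥0∞))⁻¹ • ∑ π : G, Measure.map (fun ω => (ω, π)) P0 with hμ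
  have hcard0 : (Fintype.card G : ℝ≥0∞) ≠ 0 := by
    simp [Fintype.card_ne_zero]
  have hcardT : (Fintype.card G : ℝ≥0∞) ≠ ⊤ := ENNReal.natCast_ne_top _
  have hμuniv : μ Set.univ = 1 := by
    rw [hμ, Measure.smul_apply, Measure.finset_sum_apply]
    have : ∀ π ∈ (univ : Finset G), Measure.map (fun ω : Ω0 => (ω, π)) P0 Set.univ = 1 := by
      intro π _
      rw [Measure.map_apply (hpairm π) MeasurableSet.univ]
      simp
    rw [Finset.sum_congr rfl this, Finset.sum_const, Finset.card_univ, nsmul_eq_mul, mul_one,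
      smul_eq_mul, ENNReal.inv_mul_cancel hcard0 hcardT]
  haveI hQ : IsProbabilityMeasure μ := ⟨hμuniv⟩
  set Y : Fin n → Ω0 × G → ℝ := fun i p => Z (p.2 i) p.1 with hY
  have hYm : ∀ i, Measurable (Y i) := fun i =>
    measurable_from_prod_countable_left (fun π => hZm (π i))
  have hYmarg : ∀ i, Measure.map (Y i) μ = F := by
    intro i
    rw [hμ, Measure.map_smul, jm_map_sum (hYm i)]
    have : ∀ π ∈ (univ : Finset G),
        Measure.map (Y i) (Measure.map (fun ω : Ω0 => (ω, π)) P0) = F := by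
      intro π _
      rw [Measure.map_map (hYm i) (hpairm π)]
      exact hZmarg (π i)
    rw [Finset.sum_congr rfl this, Finset.sum_const, Finset.card_univ,
      ← Nat.cast_smul_eq_nsmul ℝ≥0∞, smul_smul, ENNReal.inv_mul_cancel hcard0 hcardT, one_smul]
  refine ⟨Ω0 × G, inferInstance, μ, hQ, Y, hYm, hYmarg, ?_⟩
  intro i j hij
  -- compute the integral of the product
  have hintπ : ∀ π : G, Integrable (fun p => Y i p * Y j p)
      (Measure.map (fun ω : Ω0 => (ω, π)) P0) := by
    intro π
    rw [integrable_map_measure (g := fun p => Y i p * Y j p) (((hYm i).mul (hYm j)).aestronglyMeasurable)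
      (hpairm π).aemeasurable]
    exact jm_int_mul (hZL2 (π i)) (hZL2 (π j))
  have hval : ∫ p, Y i p * Y j p ∂μ
      = ((Fintype.card G : ℝ))⁻¹ * ∑ π : G, ∫ ω, Z (π i) ω * Z (π j) ω ∂P0 := by
    rw [hμ, integral_smul_measure, integral_finset_sum_measure (fun π _ => hintπ π)]
    have : ∀ π ∈ (univ : Finset G),
        ∫ p, Y i p * Y j p ∂(Measure.map (fun ω : Ω0 => (ω, π)) P0)
          = ∫ ω, Z (π i) ω * Z (π j) ω ∂P0 := by
      intro π _
      rw [integral_map (hpairm π).aemeasurable (f := fun p => Y i p * Y j p) (((hYm i).mul (hYm j)).aestronglyMeasurable)]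
    rw [Finset.sum_congr rfl this]
    simp [ENNReal.toReal_inv, smul_eq_mul]
  rw [hval]
  -- evaluate using the total pair sum
  have htot := jm_Tpair_total (by omega : 1 ≤ n)
    (fun a b => ∫ ω, Z a ω * Z b ω ∂P0) hij
  rw [hSZ] at htot
  have hN1 : (1 : ℝ) ≤ (n : ℝ) - 2 := by
    have : (3 : ℝ) ≤ (n : ℝ) := by exact_mod_cast hn
    linarith
  have hNpos : (0:ℝ) < (n : ℝ) := by positivity
  have hN1pos : (0:ℝ) < (n : ℝ) - 1 := by linarith
  have hcardpos : (0:ℝ) < (Fintype.card G : ℝ) := by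
    exact_mod_cast Fintype.card_pos
  have hTp : ∑ π : G, ∫ ω, Z (π i) ω * Z (π j) ω ∂P0
      = (Fintype.card G : ℝ) * (-V / ((n : ℝ) - 1)) := by
    have hNN0 : ((n : ℝ) * ((n : ℝ) - 1)) ≠ 0 := by positivity
    field_simp at htot ⊢
    nlinarith [htot]
  rw [hTp]
  rw [inv_mul_cancel_left₀ (ne_of_gt hcardpos)]

end JMConstruct

/-- Let `n ≥ 3`, `k ∈ [n] \ {1, n-1, n}`, and `F` be `n`-completely mixable with mean `0`
and finite positive variance. A coupling with marginals `F` minimizes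
`max_{K⊆[n], |K|=k} E[(∑_{i∈K} X_i)²]` over all couplings iff it is an NCD joint mix
with correlation matrix `P_n*`. -/
theorem stmt13 {n k : ℕ} (hn : 3 ≤ n) (hk1 : 1 ≤ k) (hkn : k ≤ n)
    (hknot1 : k ≠ 1) (hknotn1 : k ≠ n - 1) (hknotn : k ≠ n)
    (F : Measure ℝ) [IsProbabilityMeasure F]
    (hF2 : MemLp id 2 F) (hmean : ∫ x, x ∂F = 0) (hvarpos : 0 < variance id F)
    (hCM : ∃ (Ω0 : Type) (_ : MeasurableSpace Ω0) (P0 : Measure Ω0)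
        (_ : IsProbabilityMeasure P0) (Z : Fin n → Ω0 → ℝ),
      (∀ i, Measurable (Z i)) ∧ (∀ i, Measure.map (Z i) P0 = F) ∧
      ∃ c : ℝ, ∀ᵐ ω ∂P0, ∑ i, Z i ω = c)
    {Ω : Type*} [MeasurableSpace Ω] (P : Measure Ω) [IsProbabilityMeasure P]
    (X : Fin n → Ω → ℝ) (hmX : ∀ i, Measurable (X i))
    (hmarg : ∀ i, Measure.map (X i) P = F) :
    (∀ (Ω' : Type) (m' : MeasurableSpace Ω') (Q : Measure Ω'), IsProbabilityMeasure Q →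
        ∀ Y : Fin n → Ω' → ℝ, (∀ i, Measurable (Y i)) →
        (∀ i, Measure.map (Y i) Q = F) →
        sSup ((fun K : Finset (Fin n) => ∫ ω, (∑ i ∈ K, X i ω) ^ 2 ∂P) ''
            {K | K.card = k}) ≤
        sSup ((fun K : Finset (Fin n) => ∫ ω', (∑ i ∈ K, Y i ω') ^ 2 ∂Q) ''
            {K | K.card = k}))
    ↔ ((∃ c : ℝ, ∀ᵐ ω ∂P, ∑ i, X i ω = c) ∧
        ∀ i j, i ≠ j → cov P (X i) (X j) = -(variance id F) / ((n : ℝ) - 1)) := by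
  classical
  have hk2 : 2 ≤ k := by omega
  have hkn2 : k + 2 ≤ n := by omega
  have hNR : (3 : ℝ) ≤ (n : ℝ) := by exact_mod_cast hn
  have hkR : (2 : ℝ) ≤ (k : ℝ) := by exact_mod_cast hk2
  have hkRn : (k : ℝ) ≤ (n : ℝ) := by exact_mod_cast hkn
  set V := variance id F with hV
  set b : ℝ := (k : ℝ) * V + (k : ℝ) * ((k : ℝ) - 1) * (-V / ((n : ℝ) - 1)) with hb
  constructor
  · -- minimizer → NCD joint mix with P_n^*
    intro hmin
    obtain ⟨Ω', m', Q, hQ, Ys, hYsm, hYsmarg, hYspair⟩ := jm_construct hn hF2 hmean hCM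
    letI := m'
    haveI := hQ
    set v : Finset (Fin n) → ℝ := fun K => ∫ ω, (∑ i ∈ K, X i ω) ^ 2 ∂P with hv
    have hminle : sSup (v '' {K : Finset (Fin n) | K.card = k}) ≤ b := by
      have h1 := hmin Ω' m' Q hQ Ys hYsm hYsmarg
      have hYb : ∀ K : Finset (Fin n), K.card = k →
          (fun K : Finset (Fin n) => ∫ ω', (∑ i ∈ K, Ys i ω') ^ 2 ∂Q) K = b := fun K hK =>
        (jm_value (by omega) hF2 hmean hYsm hYsmarg hYspair hK).trans hb.symm
      rwa [jm_sSup_const hkn hYb] at h1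
    obtain ⟨K0, -, hK0⟩ := Finset.exists_subset_card_eq
      (s := (Finset.univ : Finset (Fin n))) (n := k) (by simpa using hkn)
    have hi0j0 : (⟨0, by omega⟩ : Fin n) ≠ (⟨1, by omega⟩ : Fin n) := by
      intro h
      have := congrArg Fin.val h
      simp at this
    set i0 : Fin n := ⟨0, by omega⟩
    set j0 : Fin n := ⟨1, by omega⟩
    set g := (Fintype.card (Equiv.Perm (Fin n)) : ℝ) with hg
    have hgpos : (0 : ℝ) < g := by rw [hg]; exact_mod_cast Fintype.card_pos
    have htermX : ∀ π : Equiv.Perm (Fin n),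
        ∫ ω, (∑ i ∈ K0, X (π i) ω) ^ 2 ∂P = v (K0.image (⇑π)) := by
      intro π
      have hsum : ∀ ω : Ω, ∑ a ∈ K0.image (⇑π), X a ω = ∑ i ∈ K0, X (π i) ω := fun ω =>
        Finset.sum_image (fun a _ c _ hab => π.injective hab)
      rw [hv]
      simp only []
      simp_rw [hsum]
    have hvle : ∀ K : Finset (Fin n), K.card = k → v K ≤ b := fun K hK =>
      le_trans (le_csSup (jm_bdd v) (jm_mem_img hK)) hminle
    have hterm : ∀ π : Equiv.Perm (Fin n), ∫ ω, (∑ i ∈ K0, X (π i) ω) ^ 2 ∂P ≤ b := by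
      intro π
      rw [htermX π]
      exact hvle _ (by rw [Finset.card_image_of_injective _ π.injective, hK0])
    set T := ∑ π : Equiv.Perm (Fin n), ∫ ω, (∑ i ∈ K0, X (π i) ω) ^ 2 ∂P with hT
    set Tp := ∑ π : Equiv.Perm (Fin n), ∫ ω, X (π i0) ω * X (π j0) ω ∂P with hTpdef
    set S := ∑ a, ∑ c ∈ Finset.univ.erase a, ∫ ω, X a ω * X c ω ∂P with hSdef
    have hID : T = g * ((k : ℝ) * V) + ((k : ℝ) * ((k : ℝ) - 1)) * Tp :=
      jm_avg hF2 hmean hmX hmarg hK0 (by omega) hi0j0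
    have hTptot : ((n : ℝ) * ((n : ℝ) - 1)) * Tp = g * S :=
      jm_Tpair_total (by omega) (fun a c => ∫ ω, X a ω * X c ω ∂P) hi0j0
    have hTle : T ≤ g * b := by
      calc T ≤ ∑ _π : Equiv.Perm (Fin n), b := Finset.sum_le_sum fun π _ => hterm π
        _ = g * b := by rw [Finset.sum_const, Finset.card_univ, nsmul_eq_mul]
    have hexpU : ∫ ω, (∑ i, X i ω) ^ 2 ∂P = (n : ℝ) * V + S := by
      have h := jm_expand_split hF2 hmean hmX hmarg (Finset.univ : Finset (Fin n))
      rw [Finset.card_univ, Fintype.card_fin] at h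
      exact h
    have hSge : -((n : ℝ) * V) ≤ S := by
      have h2 : (0 : ℝ) ≤ ∫ ω, (∑ i, X i ω) ^ 2 ∂P := integral_nonneg fun ω => sq_nonneg _
      rw [hexpU] at h2
      linarith
    have hkk : (0 : ℝ) ≤ (k : ℝ) * ((k : ℝ) - 1) := by nlinarith
    have hkkpos : (0 : ℝ) < (k : ℝ) * ((k : ℝ) - 1) * g :=
      mul_pos (by nlinarith) hgpos
    have e1 : ((n : ℝ) * ((n : ℝ) - 1)) * T
        = ((n : ℝ) * ((n : ℝ) - 1)) * (g * ((k : ℝ) * V))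
          + ((k : ℝ) * ((k : ℝ) - 1)) * (g * S) := by
      linear_combination ((n : ℝ) * ((n : ℝ) - 1)) * hID + ((k : ℝ) * ((k : ℝ) - 1)) * hTptot
    have hbid : ((n : ℝ) * ((n : ℝ) - 1) * g) * b
        = ((n : ℝ) * ((n : ℝ) - 1)) * (g * ((k : ℝ) * V))
          + ((k : ℝ) * ((k : ℝ) - 1)) * (g * (-((n : ℝ) * V))) := by
      rw [hb]
      have hne : ((n : ℝ) - 1) ≠ 0 := by nlinarith
      field_simp
    have e3 : ((n : ℝ) * ((n : ℝ) - 1)) * T ≤ ((n : ℝ) * ((n : ℝ) - 1)) * (g * b) :=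
      mul_le_mul_of_nonneg_left hTle (by nlinarith)
    have h5 : ((k : ℝ) * ((k : ℝ) - 1) * g) * S
        ≤ ((k : ℝ) * ((k : ℝ) - 1) * g) * (-((n : ℝ) * V)) := by nlinarith [e1, e3, hbid]
    have hSle : S ≤ -((n : ℝ) * V) := le_of_mul_le_mul_left h5 hkkpos
    have hSX : S = -((n : ℝ) * V) := le_antisymm hSle hSge
    have hsq0 : ∫ ω, (∑ i, X i ω) ^ 2 ∂P = 0 := by rw [hexpU, hSX]; ring
    have hXL2 : ∀ i, MemLp (X i) 2 P := fun i => jm_memL2 hF2 (hmX i) (hmarg i)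
    have hint2 : Integrable (fun ω => (∑ i, X i ω) ^ 2) P :=
      ((memLp_finset_sum Finset.univ (fun i _ => hXL2 i)).integrable_sq).congr
        (Filter.Eventually.of_forall fun ω => rfl)
    have haesq := (integral_eq_zero_iff_of_nonneg (fun ω => sq_nonneg _) hint2).1 hsq0
    have haesum : ∀ᵐ ω ∂P, ∑ i, X i ω = 0 := haesq.mono fun ω hω => by
      have h2 : (∑ i, X i ω) ^ 2 = 0 := hω
      exact (pow_eq_zero_iff two_ne_zero).1 h2
    refine ⟨⟨0, haesum⟩, ?_⟩
    have h6 : ((n : ℝ) * ((n : ℝ) - 1)) * T = ((n : ℝ) * ((n : ℝ) - 1)) * (g * b) := by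
      linear_combination e1 + ((k : ℝ) * ((k : ℝ) - 1) * g) * hSX - hbid
    have hTeq : T = g * b :=
      mul_left_cancel₀ (by nlinarith : ((n : ℝ) * ((n : ℝ) - 1)) ≠ 0) h6
    have hzero : ∑ π : Equiv.Perm (Fin n),
        (b - ∫ ω, (∑ i ∈ K0, X (π i) ω) ^ 2 ∂P) = 0 := by
      rw [Finset.sum_sub_distrib, Finset.sum_const, Finset.card_univ, nsmul_eq_mul, ← hT, hTeq]
      ring
    have heach := (Finset.sum_eq_zero_iff_of_nonneg
      (fun π _ => by linarith [hterm π])).1 hzero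
    have hvJ : ∀ J : Finset (Fin n), J.card = k → v J = b := by
      intro J hJ
      obtain ⟨π, hπ⟩ := jm_set_perm (K := K0) (J := J) (by rw [hK0, hJ])
      have h7 := heach π (Finset.mem_univ π)
      rw [htermX π, hπ] at h7
      linarith
    have hsym : ∀ a c : Fin n, (∫ ω, X a ω * X c ω ∂P) = ∫ ω, X c ω * X a ω ∂P := fun a c =>
      integral_congr_ae (Filter.Eventually.of_forall fun ω => mul_comm _ _)
    have hrowX : ∀ i, ∑ j ∈ Finset.univ.erase i, ∫ ω, X i ω * X j ω ∂P = -V :=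
      jm_row hF2 hmean hmX hmarg haesum
    have hHX : ∀ J : Finset (Fin n), J.card = k →
        jmH (fun a c => ∫ ω, X a ω * X c ω ∂P) J = b - (k : ℝ) * V := by
      intro J hJ
      have hex := jm_expand_split hF2 hmean hmX hmarg J
      rw [hJ] at hex
      have hval : ∫ ω, (∑ i ∈ J, X i ω) ^ 2 ∂P = b := hvJ J hJ
      rw [jmH]
      show ∑ i ∈ J, ∑ j ∈ J.erase i, ∫ ω, X i ω * X j ω ∂P = b - (k : ℝ) * V
      linarith [hex, hval]
    have hfinal := jm_matrix hk2 hkn2 (fun a c => ∫ ω, X a ω * X c ω ∂P) hsym hrowX hHX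
    intro i j hij
    have hcoveq : cov P (X i) (X j) = ∫ ω, X i ω * X j ω ∂P := by
      simp only [cov, jm_int0 hmean (hmX i) (hmarg i), jm_int0 hmean (hmX j) (hmarg j),
        sub_zero]
    rw [hcoveq]
    exact hfinal i j hij
  · -- NCD joint mix with P_n^* → minimizer
    rintro ⟨-, hcov⟩ Ω' m' Q hQ Y hmY hmargY
    letI := m'
    haveI := hQ
    have hpairX : ∀ i j : Fin n, i ≠ j →
        ∫ ω, X i ω * X j ω ∂P = -V / ((n : ℝ) - 1) := by
      intro i j hij
      have h := hcov i j hij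
      simp only [cov, jm_int0 hmean (hmX i) (hmarg i), jm_int0 hmean (hmX j) (hmarg j),
        sub_zero] at h
      exact h
    have hXval : ∀ K : Finset (Fin n), K.card = k →
        (fun K : Finset (Fin n) => ∫ ω, (∑ i ∈ K, X i ω) ^ 2 ∂P) K = b := fun K hK =>
      (jm_value (by omega) hF2 hmean hmX hmarg hpairX hK).trans hb.symm
    rw [jm_sSup_const hkn hXval, hb]
    exact jm_lower_bound hn hk2 hkn hF2 hmean hmY hmargY
end

section
/- Let X_1, X_2, X_3 be random variables with zero means and finite variances whose sum is a.s. constant (hence 0). Then for every K ⊆ {1,2,3}, E[(∑_{i∈K} X_i)²] ≤ max(Var(X_1), Var(X_2), Var(X_3)); consequently any joint mix attains the minimum value max_i Var(X_i) of max_{K⊆[3]} E[(∑_{i∈K} X_i)²] over all couplings with the given marginals. -/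
open MeasureTheory ProbabilityTheory

/-- For a centered 3-dimensional joint mix, every partial sum has second moment bounded by
the maximal variance, and the maximum over all subsets equals the maximal variance
(the optimal value over all couplings with the given marginals). -/
theorem stmt14 {Ω : Type*} [MeasurableSpace Ω] (P : Measure Ω) [IsProbabilityMeasure P]
    (X : Fin 3 → Ω → ℝ) (hmeas : ∀ i, Measurable (X i)) (hL2 : ∀ i, MemLp (X i) 2 P)
    (hmean : ∀ i, ∫ ω, X i ω ∂P = 0)
    (hJM : ∃ c : ℝ, ∀ᵐ ω ∂P, ∑ i, X i ω = c) :
    (∀ K : Finset (Fin 3), ∫ ω, (∑ i ∈ K, X i ω) ^ 2 ∂P ≤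
      max (variance (X 0) P) (max (variance (X 1) P) (variance (X 2) P))) ∧
    sSup (Set.range fun K : Finset (Fin 3) => ∫ ω, (∑ i ∈ K, X i ω) ^ 2 ∂P)
      = max (variance (X 0) P) (max (variance (X 1) P) (variance (X 2) P)) := by
  have hint : ∀ i, Integrable (X i) P := fun i => (hL2 i).integrable (by norm_num)
  obtain ⟨c, hc⟩ := hJM
  have hc0 : c = 0 := by
    have h1 : ∫ ω, (∑ i, X i ω) ∂P = c := by
      rw [integral_congr_ae hc]; simp
    have h2 : ∫ ω, (∑ i, X i ω) ∂P = 0 := by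
      rw [integral_finset_sum _ (fun i _ => hint i)]
      simp [hmean]
    rw [h2] at h1; exact h1.symm
  subst hc0
  have hsum : ∀ᵐ ω ∂P, X 0 ω + X 1 ω + X 2 ω = 0 := by
    filter_upwards [hc] with ω hω
    simpa [Fin.sum_univ_three] using hω
  have hvar : ∀ i, variance (X i) P = ∫ ω, X i ω ^ 2 ∂P := by
    intro i
    rw [variance_eq_sub (hL2 i), hmean]
    simp
  set M := max (variance (X 0) P) (max (variance (X 1) P) (variance (X 2) P)) with hM
  have hv0 : variance (X 0) P ≤ M := le_max_left _ _
  have hv1 : variance (X 1) P ≤ M := le_trans (le_max_left _ _) (le_max_right _ _)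
  have hv2 : variance (X 2) P ≤ M := le_trans (le_max_right _ _) (le_max_right _ _)
  have hMnn : 0 ≤ M := le_trans (variance_nonneg _ _) hv0
  have hbound : ∀ K : Finset (Fin 3), ∫ ω, (∑ i ∈ K, X i ω) ^ 2 ∂P ≤ M := by
    intro K
    fin_cases K
    · simp [hMnn]
    · -- {0}
      calc ∫ ω, (∑ i ∈ ({0} : Finset (Fin 3)), X i ω) ^ 2 ∂P
          = variance (X 0) P := by rw [hvar]; simp
        _ ≤ M := hv0
    · calc ∫ ω, (∑ i ∈ ({1} : Finset (Fin 3)), X i ω) ^ 2 ∂P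
          = variance (X 1) P := by rw [hvar]; simp
        _ ≤ M := hv1
    · -- {0,1}
      calc ∫ ω, (∑ i ∈ ({0,1} : Finset (Fin 3)), X i ω) ^ 2 ∂P
          = variance (X 2) P := by
            rw [hvar]
            apply integral_congr_ae
            filter_upwards [hsum] with ω hω
            have : X 0 ω + X 1 ω = - X 2 ω := by linarith
            simp [Finset.sum_insert, this]
        _ ≤ M := hv2
    · calc ∫ ω, (∑ i ∈ ({2} : Finset (Fin 3)), X i ω) ^ 2 ∂P
          = variance (X 2) P := by rw [hvar]; simp
        _ ≤ M := hv2
    · -- {0,2}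
      calc ∫ ω, (∑ i ∈ ({0,2} : Finset (Fin 3)), X i ω) ^ 2 ∂P
          = variance (X 1) P := by
            rw [hvar]
            apply integral_congr_ae
            filter_upwards [hsum] with ω hω
            have : X 0 ω + X 2 ω = - X 1 ω := by linarith
            simp [Finset.sum_insert, this]
        _ ≤ M := hv1
    · -- {1,2}
      calc ∫ ω, (∑ i ∈ ({1,2} : Finset (Fin 3)), X i ω) ^ 2 ∂P
          = variance (X 0) P := by
            rw [hvar]
            apply integral_congr_ae
            filter_upwards [hsum] with ω hω
            have : X 1 ω + X 2 ω = - X 0 ω := by linarith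
            simp [Finset.sum_insert, this]
        _ ≤ M := hv0
    · -- univ
      have : ∫ ω, (∑ i ∈ (Finset.univ : Finset (Fin 3)), X i ω) ^ 2 ∂P = 0 := by
        rw [← integral_zero Ω ℝ (μ := P)]
        apply integral_congr_ae
        filter_upwards [hsum] with ω hω
        simp [Fin.sum_univ_three]
        nlinarith [hω]
      calc ∫ ω, (∑ i ∈ ({0,1,2} : Finset (Fin 3)), X i ω) ^ 2 ∂P
          = ∫ ω, (∑ i ∈ (Finset.univ : Finset (Fin 3)), X i ω) ^ 2 ∂P := by
            have he : ({0,1,2} : Finset (Fin 3)) = Finset.univ := by decide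
            rw [he]
        _ = 0 := this
        _ ≤ M := hMnn
  have hbdd : BddAbove (Set.range fun K : Finset (Fin 3) => ∫ ω, (∑ i ∈ K, X i ω) ^ 2 ∂P) :=
    ⟨M, by rintro x ⟨K, rfl⟩; exact hbound K⟩
  refine ⟨hbound, le_antisymm (csSup_le (Set.range_nonempty _)
    (by rintro x ⟨K, rfl⟩; exact hbound K)) ?_⟩
  obtain ⟨i, hi⟩ : ∃ i : Fin 3, variance (X i) P = M := by
    rcases max_choice (variance (X 1) P) (variance (X 2) P) with h | h <;>
      rcases max_choice (variance (X 0) P) (max (variance (X 1) P) (variance (X 2) P)) with h' | h'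
    · exact ⟨0, h'.symm⟩
    · exact ⟨1, by rw [hM, h', h]⟩
    · exact ⟨0, h'.symm⟩
    · exact ⟨2, by rw [hM, h', h]⟩
  refine le_csSup hbdd ⟨({i} : Finset (Fin 3)), ?_⟩
  show ∫ ω, (∑ j ∈ ({i} : Finset (Fin 3)), X j ω) ^ 2 ∂P = M
  simp only [Finset.sum_singleton]
  rw [← hvar, hi]
end
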